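/- Let F be a field with |F| ≤ 3 (i.e., |F| = 2 or |F| = 3). Then every matrix in the commutator subgroup SL_2(F)′ of SL_2(F) is a product of at most |F| − 1 commutators of unipotent matrices of index 2, and the commutator subgroup SL_2(F)′ is a proper subgroup of SL_2(F). -/

import Mathlib

open Matrix

variable {F : Type*} [Field F]

/-- A unipotent matrix of index 2: `A ≠ I` and `(A - I)² = 0`. -/
def IsU2 {m : Type*} [Fintype m] [DecidableEq m] (A : Matrix m m F) : Prop :=
  A ≠ 1 ∧ (A - 1) ^ 2 = 0

/-- A commutator `X * Y * X⁻¹ * Y⁻¹` of unipotent matrices of index 2. -/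
def IsCommU2 {m : Type*} [Fintype m] [DecidableEq m] (A : Matrix m m F) : Prop :=
  ∃ X Y : Matrix m m F, IsU2 X ∧ IsU2 Y ∧ A = X * Y * X⁻¹ * Y⁻¹

/-- `A` is a product of at most `k` commutators of unipotent matrices of index 2. -/
def IsProdCommU2 {m : Type*} [Fintype m] [DecidableEq m] (k : ℕ) (A : Matrix m m F) : Prop :=
  ∃ L : List (Matrix m m F), L.length ≤ k ∧ (∀ B ∈ L, IsCommU2 B) ∧ L.prod = A

/-- `A` is a product of at most `k` unipotent matrices of index 2. -/
def IsProdU2 {m : Type*} [Fintype m] [DecidableEq m] (k : ℕ) (A : Matrix m m F) : Prop :=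
  ∃ L : List (Matrix m m F), L.length ≤ k ∧ (∀ B ∈ L, IsU2 B) ∧ L.prod = A

/-! ### Auxiliary material -/

abbrev MySL2 (R : Type*) [CommRing R] := Matrix.SpecialLinearGroup (Fin 2) R

lemma myIsU2_inv_eq {X : Matrix (Fin 2) (Fin 2) F} (h : IsU2 X) :
    X⁻¹ = 2 • (1 : Matrix (Fin 2) (Fin 2) F) - X := by
  apply Matrix.inv_eq_right_inv
  have key : X * (2 • (1 : Matrix (Fin 2) (Fin 2) F) - X) = 1 - (X - 1) ^ 2 := by
    simp only [two_smul, mul_sub, sub_mul, pow_two, mul_one, one_mul]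
    noncomm_ring
  rw [key, h.2, sub_zero]

lemma myIsU2_of {X : Matrix (Fin 2) (Fin 2) F} (h1 : X ≠ 1) (h2 : (X - 1) ^ 2 = 0) :
    IsU2 X := ⟨h1, h2⟩

lemma myIsCommU2_of {X Y M : Matrix (Fin 2) (Fin 2) F} (hX : IsU2 X) (hY : IsU2 Y)
    (h : M = X * Y * (2 • (1 : Matrix (Fin 2) (Fin 2) F) - X) *
      (2 • (1 : Matrix (Fin 2) (Fin 2) F) - Y)) : IsCommU2 M :=
  ⟨X, Y, hX, hY, by rw [myIsU2_inv_eq hX, myIsU2_inv_eq hY]; exact h⟩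

section transport

variable {K : Type*} [Field K]

lemma myIsU2_map (e : K ≃+* F) {X : Matrix (Fin 2) (Fin 2) K} (h : IsU2 X) :
    IsU2 (e.mapMatrix X) := by
  refine ⟨fun hx => h.1 ?_, ?_⟩
  · have := congrArg e.mapMatrix.symm hx
    rwa [RingEquiv.symm_apply_apply, _root_.map_one] at this
  · have := congrArg e.mapMatrix h.2
    rwa [map_pow, _root_.map_sub, _root_.map_one, _root_.map_zero] at this

lemma myIsCommU2_map (e : K ≃+* F) {A : Matrix (Fin 2) (Fin 2) K} (h : IsCommU2 A) :
    IsCommU2 (e.mapMatrix A) := by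
  obtain ⟨X, Y, hX, hY, rfl⟩ := h
  refine ⟨e.mapMatrix X, e.mapMatrix Y, myIsU2_map e hX, myIsU2_map e hY, ?_⟩
  rw [myIsU2_inv_eq hX, myIsU2_inv_eq hY, myIsU2_inv_eq (myIsU2_map e hX),
    myIsU2_inv_eq (myIsU2_map e hY)]
  simp only [two_smul, _root_.map_mul, _root_.map_sub, _root_.map_add, _root_.map_one]

lemma myIsProdCommU2_map (e : K ≃+* F) {k : ℕ} {A : Matrix (Fin 2) (Fin 2) K}
    (h : IsProdCommU2 k A) : IsProdCommU2 k (e.mapMatrix A) := by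
  obtain ⟨L, hL, hmem, hprod⟩ := h
  refine ⟨L.map (e.mapMatrix ·), by simpa using hL, ?_, ?_⟩
  · intro B hB
    obtain ⟨C, hC, rfl⟩ := List.mem_map.mp hB
    exact myIsCommU2_map e (hmem C hC)
  · rw [← hprod]
    exact (map_list_prod e.mapMatrix L).symm

lemma mySL2_map_surjective (e : K ≃+* F) :
    Function.Surjective (Matrix.SpecialLinearGroup.map (n := Fin 2) e.toRingHom) := by
  intro B
  refine ⟨Matrix.SpecialLinearGroup.map (n := Fin 2) e.symm.toRingHom B, ?_⟩
  refine Subtype.ext ?_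
  ext i j
  simp [Matrix.SpecialLinearGroup.map_apply_coe, RingHom.mapMatrix_apply]

lemma my_comm_map (e : K ≃+* F) :
    Subgroup.map (Matrix.SpecialLinearGroup.map (n := Fin 2) e.toRingHom)
      (commutator (MySL2 K)) = commutator (MySL2 F) := by
  rw [commutator_def, commutator_def, Subgroup.map_commutator,
    Subgroup.map_top_of_surjective _ (mySL2_map_surjective e)]

lemma my_transport (e : K ≃+* F) (k : ℕ)
    (hK : (∀ B : MySL2 K, B ∈ commutator (MySL2 K) →
        IsProdCommU2 k (B : Matrix (Fin 2) (Fin 2) K)) ∧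
      commutator (MySL2 K) ≠ ⊤) :
    (∀ A : MySL2 F, A ∈ commutator (MySL2 F) →
        IsProdCommU2 k (A : Matrix (Fin 2) (Fin 2) F)) ∧
      commutator (MySL2 F) ≠ ⊤ := by
  constructor
  · intro A hA
    rw [← my_comm_map e] at hA
    obtain ⟨B, hB, rfl⟩ := hA
    have := myIsProdCommU2_map e (hK.1 B hB)
    have hcoe : ((Matrix.SpecialLinearGroup.map (n := Fin 2) e.toRingHom B :
        MySL2 F) : Matrix (Fin 2) (Fin 2) F) = e.mapMatrix (B : Matrix (Fin 2) (Fin 2) K) := rfl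
    rwa [hcoe]
  · intro htop
    apply hK.2
    have := my_comm_map e.symm
    rw [htop, Subgroup.map_top_of_surjective _ (mySL2_map_surjective e.symm)] at this
    exact this.symm

end transport

/-! ### The case of `ZMod 2` -/

def myL2 : List (Matrix (Fin 2) (Fin 2) (ZMod 2)) := [1, !![1,1;1,0], !![0,1;1,1]]

lemma myL2_mul : ∀ a b : MySL2 (ZMod 2), (a : Matrix (Fin 2) (Fin 2) (ZMod 2)) ∈ myL2 →
    (b : Matrix (Fin 2) (Fin 2) (ZMod 2)) ∈ myL2 →
    ((a * b : MySL2 (ZMod 2)) : Matrix (Fin 2) (Fin 2) (ZMod 2)) ∈ myL2 := by decide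

lemma myL2_inv : ∀ a : MySL2 (ZMod 2), (a : Matrix (Fin 2) (Fin 2) (ZMod 2)) ∈ myL2 →
    ((a⁻¹ : MySL2 (ZMod 2)) : Matrix (Fin 2) (Fin 2) (ZMod 2)) ∈ myL2 := by decide

def myH2 : Subgroup (MySL2 (ZMod 2)) where
  carrier := {g | (g : Matrix (Fin 2) (Fin 2) (ZMod 2)) ∈ myL2}
  one_mem' := by decide
  mul_mem' {a b} ha hb := myL2_mul a b ha hb
  inv_mem' {a} ha := myL2_inv a ha

lemma my_mem_H2 {g : MySL2 (ZMod 2)} :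
    g ∈ myH2 ↔ (g : Matrix (Fin 2) (Fin 2) (ZMod 2)) ∈ myL2 := Iff.rfl

open scoped commutatorElement in
lemma myL2_comm : ∀ g h : MySL2 (ZMod 2),
    ((⁅g, h⁆ : MySL2 (ZMod 2)) : Matrix (Fin 2) (Fin 2) (ZMod 2)) ∈ myL2 := by decide

lemma my_comm_le_H2 : commutator (MySL2 (ZMod 2)) ≤ myH2 := by
  rw [commutator_def, Subgroup.commutator_le]
  intro g _ h _
  exact (my_mem_H2).mpr (myL2_comm g h)

lemma my_prod_L2 : ∀ M ∈ myL2, IsProdCommU2 1 M := by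
  have key : ∀ N ∈ myL2, IsCommU2 N := by
    intro N hN
    simp only [myL2, List.mem_cons, List.not_mem_nil, or_false] at hN
    rcases hN with rfl | rfl | rfl
    · exact myIsCommU2_of (X := !![1,1;0,1]) (Y := !![1,1;0,1])
        (myIsU2_of (by decide) (by decide)) (myIsU2_of (by decide) (by decide)) (by decide)
    · exact myIsCommU2_of (X := !![1,1;0,1]) (Y := !![1,0;1,1])
        (myIsU2_of (by decide) (by decide)) (myIsU2_of (by decide) (by decide)) (by decide)
    · exact myIsCommU2_of (X := !![1,0;1,1]) (Y := !![1,1;0,1])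
        (myIsU2_of (by decide) (by decide)) (myIsU2_of (by decide) (by decide)) (by decide)
  intro M hM
  exact ⟨[M], by simp, by simpa using key M hM, by simp⟩

def myT2 : MySL2 (ZMod 2) := ⟨!![1,1;0,1], by decide⟩

lemma my_fact2 :
    (∀ B : MySL2 (ZMod 2), B ∈ commutator (MySL2 (ZMod 2)) →
      IsProdCommU2 1 (B : Matrix (Fin 2) (Fin 2) (ZMod 2))) ∧
      commutator (MySL2 (ZMod 2)) ≠ ⊤ := by
  constructor
  · intro B hB
    exact my_prod_L2 _ (my_mem_H2.mp (my_comm_le_H2 hB))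
  · intro htop
    have hmem : myT2 ∈ commutator (MySL2 (ZMod 2)) := by
      rw [htop]; exact Subgroup.mem_top _
    have h2 : (myT2 : Matrix (Fin 2) (Fin 2) (ZMod 2)) ∈ myL2 :=
      my_mem_H2.mp (my_comm_le_H2 hmem)
    revert h2; decide

/-! ### The case of `ZMod 3` -/

def myL3 : List (Matrix (Fin 2) (Fin 2) (ZMod 3)) :=
  [1, !![2,0;0,2], !![0,2;1,0], !![0,1;2,0], !![1,1;1,2], !![2,2;2,1], !![1,2;2,2], !![2,1;1,1]]

lemma myL3_mul : ∀ a b : MySL2 (ZMod 3), (a : Matrix (Fin 2) (Fin 2) (ZMod 3)) ∈ myL3 →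
    (b : Matrix (Fin 2) (Fin 2) (ZMod 3)) ∈ myL3 →
    ((a * b : MySL2 (ZMod 3)) : Matrix (Fin 2) (Fin 2) (ZMod 3)) ∈ myL3 := by decide

lemma myL3_inv : ∀ a : MySL2 (ZMod 3), (a : Matrix (Fin 2) (Fin 2) (ZMod 3)) ∈ myL3 →
    ((a⁻¹ : MySL2 (ZMod 3)) : Matrix (Fin 2) (Fin 2) (ZMod 3)) ∈ myL3 := by decide

def myH3 : Subgroup (MySL2 (ZMod 3)) where
  carrier := {g | (g : Matrix (Fin 2) (Fin 2) (ZMod 3)) ∈ myL3}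
  one_mem' := by decide
  mul_mem' {a b} ha hb := myL3_mul a b ha hb
  inv_mem' {a} ha := myL3_inv a ha

lemma my_mem_H3 {g : MySL2 (ZMod 3)} :
    g ∈ myH3 ↔ (g : Matrix (Fin 2) (Fin 2) (ZMod 3)) ∈ myL3 := Iff.rfl

open scoped commutatorElement in
lemma myL3_comm : ∀ g h : MySL2 (ZMod 3),
    ((⁅g, h⁆ : MySL2 (ZMod 3)) : Matrix (Fin 2) (Fin 2) (ZMod 3)) ∈ myL3 := by decide

lemma my_comm_le_H3 : commutator (MySL2 (ZMod 3)) ≤ myH3 := by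
  rw [commutator_def, Subgroup.commutator_le]
  intro g _ h _
  exact (my_mem_H3).mpr (myL3_comm g h)

lemma my_comm_i : IsCommU2 (!![0,2;1,0] : Matrix (Fin 2) (Fin 2) (ZMod 3)) :=
  myIsCommU2_of (X := !![1,1;0,1]) (Y := !![1,0;1,1])
    (myIsU2_of (by decide) (by decide)) (myIsU2_of (by decide) (by decide)) (by decide)

lemma my_comm_i' : IsCommU2 (!![0,1;2,0] : Matrix (Fin 2) (Fin 2) (ZMod 3)) :=
  myIsCommU2_of (X := !![1,2;0,1]) (Y := !![1,0;2,1])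
    (myIsU2_of (by decide) (by decide)) (myIsU2_of (by decide) (by decide)) (by decide)

lemma my_comm_j : IsCommU2 (!![1,1;1,2] : Matrix (Fin 2) (Fin 2) (ZMod 3)) :=
  myIsCommU2_of (X := !![1,1;0,1]) (Y := !![1,0;2,1])
    (myIsU2_of (by decide) (by decide)) (myIsU2_of (by decide) (by decide)) (by decide)

lemma my_comm_j' : IsCommU2 (!![2,2;2,1] : Matrix (Fin 2) (Fin 2) (ZMod 3)) :=
  myIsCommU2_of (X := !![1,0;2,1]) (Y := !![1,1;0,1])
    (myIsU2_of (by decide) (by decide)) (myIsU2_of (by decide) (by decide)) (by decide)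

lemma my_comm_k : IsCommU2 (!![1,2;2,2] : Matrix (Fin 2) (Fin 2) (ZMod 3)) :=
  myIsCommU2_of (X := !![1,2;0,1]) (Y := !![1,0;1,1])
    (myIsU2_of (by decide) (by decide)) (myIsU2_of (by decide) (by decide)) (by decide)

lemma my_comm_k' : IsCommU2 (!![2,1;1,1] : Matrix (Fin 2) (Fin 2) (ZMod 3)) :=
  myIsCommU2_of (X := !![1,0;1,1]) (Y := !![1,2;0,1])
    (myIsU2_of (by decide) (by decide)) (myIsU2_of (by decide) (by decide)) (by decide)

lemma my_prod_L3 : ∀ M ∈ myL3, IsProdCommU2 2 M := by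
  intro M hM
  simp only [myL3, List.mem_cons, List.not_mem_nil, or_false] at hM
  rcases hM with rfl | rfl | rfl | rfl | rfl | rfl | rfl | rfl
  · exact ⟨[], by simp, by simp, by simp⟩
  · refine ⟨[!![0,2;1,0], !![0,2;1,0]], by simp, ?_, by decide⟩
    intro B hB
    simp only [List.mem_cons, List.not_mem_nil, or_false] at hB
    rcases hB with rfl | rfl <;> exact my_comm_i
  · exact ⟨[!![0,2;1,0]], by simp, by simpa using my_comm_i, by simp⟩
  · exact ⟨[!![0,1;2,0]], by simp, by simpa using my_comm_i', by simp⟩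
  · exact ⟨[!![1,1;1,2]], by simp, by simpa using my_comm_j, by simp⟩
  · exact ⟨[!![2,2;2,1]], by simp, by simpa using my_comm_j', by simp⟩
  · exact ⟨[!![1,2;2,2]], by simp, by simpa using my_comm_k, by simp⟩
  · exact ⟨[!![2,1;1,1]], by simp, by simpa using my_comm_k', by simp⟩

def myT3 : MySL2 (ZMod 3) := ⟨!![1,1;0,1], by decide⟩

lemma my_fact3 :
    (∀ B : MySL2 (ZMod 3), B ∈ commutator (MySL2 (ZMod 3)) →
      IsProdCommU2 2 (B : Matrix (Fin 2) (Fin 2) (ZMod 3))) ∧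
      commutator (MySL2 (ZMod 3)) ≠ ⊤ := by
  constructor
  · intro B hB
    exact my_prod_L3 _ (my_mem_H3.mp (my_comm_le_H3 hB))
  · intro htop
    have hmem : myT3 ∈ commutator (MySL2 (ZMod 3)) := by
      rw [htop]; exact Subgroup.mem_top _
    have h3 : (myT3 : Matrix (Fin 2) (Fin 2) (ZMod 3)) ∈ myL3 :=
      my_mem_H3.mp (my_comm_le_H3 hmem)
    revert h3; decide

theorem stmt19 {F : Type*} [Field F] [Fintype F] (hF : Fintype.card F ≤ 3) :
    (∀ A : Matrix.SpecialLinearGroup (Fin 2) F,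
      A ∈ commutator (Matrix.SpecialLinearGroup (Fin 2) F) →
      IsProdCommU2 (Fintype.card F - 1) (A : Matrix (Fin 2) (Fin 2) F)) ∧
    commutator (Matrix.SpecialLinearGroup (Fin 2) F) ≠ ⊤ := by
  have h2 : 1 < Fintype.card F := Fintype.one_lt_card
  have hcard : Fintype.card F = 2 ∨ Fintype.card F = 3 := by omega
  rcases hcard with hc | hc
  · have e : ZMod 2 ≃+* F := ZMod.ringEquivOfPrime F (by norm_num) hc
    rw [hc]
    exact my_transport e 1 my_fact2
  · have e : ZMod 3 ≃+* F := ZMod.ringEquivOfPrime F (by norm_num) hc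
    rw [hc]
    exact my_transport e 2 my_fact3
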